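/- arXiv:1605.05131 — 6 statements merged into one kernel-verified Lean document; each statement's English description precedes it below -/
import Mathlib

section
/- For every positive integer n, the companion matrix of t^n (i.e., the nilpotent Jordan block transpose, with 1's on the subdiagonal and zeros elsewhere) is the sum of two square-zero matrices. -/
/-- The companion matrix of `t ^ n` (ones on the subdiagonal, zeros elsewhere)
is the sum of two square-zero matrices. -/
theorem companion_pow_sum_two_square_zero (F : Type*) [Field F] (n : ℕ) (hn : 0 < n) :
    ∃ A B : Matrix (Fin n) (Fin n) F,
      A ^ 2 = 0 ∧ B ^ 2 = 0 ∧
      (fun i j : Fin n => if (i : ℕ) = (j : ℕ) + 1 then (1 : F) else 0) = A + B := by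
  refine ⟨Matrix.of (fun i j => if (i : ℕ) = (j : ℕ) + 1 ∧ Even (j : ℕ) then 1 else 0),
          Matrix.of (fun i j => if (i : ℕ) = (j : ℕ) + 1 ∧ ¬ Even (j : ℕ) then 1 else 0), ?_, ?_, ?_⟩
  · ext i j
    simp only [pow_two, Matrix.mul_apply, Matrix.zero_apply, Matrix.of_apply]
    apply Finset.sum_eq_zero
    intro k _
    by_cases h1 : (i : ℕ) = (k : ℕ) + 1 ∧ Even (k : ℕ)
    · by_cases h2 : (k : ℕ) = (j : ℕ) + 1 ∧ Even (j : ℕ)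
      · exfalso
        obtain ⟨_, hk⟩ := h1
        obtain ⟨hkj, hj⟩ := h2
        rw [hkj] at hk
        exact (Nat.even_add_one.mp hk) hj
      · simp [h2]
    · simp [h1]
  · ext i j
    simp only [pow_two, Matrix.mul_apply, Matrix.zero_apply, Matrix.of_apply]
    apply Finset.sum_eq_zero
    intro k _
    by_cases h1 : (i : ℕ) = (k : ℕ) + 1 ∧ ¬ Even (k : ℕ)
    · by_cases h2 : (k : ℕ) = (j : ℕ) + 1 ∧ ¬ Even (j : ℕ)
      · exfalso
        obtain ⟨_, hk⟩ := h1
        obtain ⟨hkj, hj⟩ := h2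
        exact hk (hkj ▸ Nat.even_add_one.mpr hj)
      · rw [if_neg h2, mul_zero]
    · rw [if_neg h1, zero_mul]
  · funext i j
    by_cases h : (i : ℕ) = (j : ℕ) + 1 <;> by_cases he : Even (j : ℕ) <;>
      simp [Matrix.add_apply, Matrix.of_apply, h, he, ← Nat.not_even_iff_odd]
end

section
/- For every non-constant monic polynomial p of degree n over a field F, the companion matrix C(p(t²)) ∈ Mat_{2n}(F) is similar to the block matrix [[0_n, C(p)], [I_n, 0_n]]. -/
open Polynomial

/-- The companion matrix of a monic polynomial of degree `n`:
ones on the subdiagonal, and the negatives of the coefficients of `p`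
in the last column. -/
def companion {F : Type*} [Field F] (n : ℕ) (p : Polynomial F) :
    Matrix (Fin n) (Fin n) F := fun i j =>
  if (j : ℕ) = n - 1 then -(p.coeff i)
  else if (i : ℕ) = (j : ℕ) + 1 then 1 else 0

/-- The even/odd interleaving equivalence. -/
def interleave (n : ℕ) : Fin n ⊕ Fin n ≃ Fin (n + n) where
  toFun := Sum.elim (fun a => ⟨2 * a, by omega⟩) (fun a => ⟨2 * a + 1, by omega⟩)
  invFun i := if h : (i : ℕ) % 2 = 0 then Sum.inl ⟨(i : ℕ) / 2, by omega⟩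
    else Sum.inr ⟨(i : ℕ) / 2, by omega⟩
  left_inv s := by
    rcases s with a | a <;> dsimp only [Sum.elim_inl, Sum.elim_inr, Fin.val_mk]
    · rw [dif_pos (by omega)]
      simp only [Sum.inl.injEq, Fin.ext_iff, Fin.val_mk]
      omega
    · rw [dif_neg (by omega)]
      simp only [Sum.inr.injEq, Fin.ext_iff, Fin.val_mk]
      omega
  right_inv i := by
    dsimp only
    by_cases h : (i : ℕ) % 2 = 0
    · rw [dif_pos h]
      dsimp only [Sum.elim_inl]
      ext
      simp only [Fin.val_mk]
      omega
    · rw [dif_neg h]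
      dsimp only [Sum.elim_inr]
      ext
      simp only [Fin.val_mk]
      omega

lemma interleave_inl_val (n : ℕ) (a : Fin n) : ((interleave n (Sum.inl a) : Fin (n + n)) : ℕ) = 2 * (a : ℕ) := by simp [interleave]

lemma interleave_inr_val (n : ℕ) (a : Fin n) : ((interleave n (Sum.inr a) : Fin (n + n)) : ℕ) = 2 * (a : ℕ) + 1 := by simp [interleave]

lemma permL {F : Type*} [Field F] {m : Type*} [Fintype m] [DecidableEq m] (e : m ≃ m)
    (M : Matrix m m F) :
    (1 : Matrix m m F).submatrix e id * M = M.submatrix e id := by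
  ext i j
  simp [Matrix.mul_apply, Matrix.one_apply]

lemma permR {F : Type*} [Field F] {m : Type*} [Fintype m] [DecidableEq m] (e : m ≃ m)
    (M : Matrix m m F) :
    M * (1 : Matrix m m F).submatrix e.symm id = M.submatrix id e := by
  ext i j
  simp [Matrix.mul_apply, Matrix.one_apply, Equiv.symm_apply_eq]

lemma coeff_comp_sq_even {F : Type*} [Field F] (p : Polynomial F) (k : ℕ) :
    (p.comp (X ^ 2)).coeff (2 * k) = p.coeff k := by
  rw [← Polynomial.expand_eq_comp_X_pow, Polynomial.coeff_expand_mul' (by norm_num)]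

lemma coeff_comp_sq_odd {F : Type*} [Field F] (p : Polynomial F) (k : ℕ) :
    (p.comp (X ^ 2)).coeff (2 * k + 1) = 0 := by
  rw [← Polynomial.expand_eq_comp_X_pow, Polynomial.coeff_expand (by norm_num)]
  rw [if_neg (by omega)]

lemma companion_comp_sq_eq_submatrix {F : Type*} [Field F] (n : ℕ) (hn : 0 < n)
    (p : Polynomial F) :
    companion (n + n) (p.comp (X ^ 2)) =
      (Matrix.reindex finSumFinEquiv finSumFinEquiv
        (Matrix.fromBlocks 0 (companion n p) 1 0)).submatrix
          ((interleave n).symm.trans finSumFinEquiv)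
          ((interleave n).symm.trans finSumFinEquiv) := by
  ext i j
  obtain ⟨s, rfl⟩ := (interleave n).surjective i
  obtain ⟨t, rfl⟩ := (interleave n).surjective j
  rw [Matrix.submatrix_apply, Matrix.reindex_apply, Matrix.submatrix_apply]
  simp only [Equiv.trans_apply, Equiv.symm_apply_apply]
  rcases s with a | a <;> rcases t with b | b <;>
    have ha := a.isLt <;> have hb := b.isLt <;>
    simp only [interleave_inl_val, interleave_inr_val, companion,
      Matrix.fromBlocks_apply₁₁, Matrix.fromBlocks_apply₁₂, Matrix.fromBlocks_apply₂₁,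
      Matrix.fromBlocks_apply₂₂, Matrix.zero_apply, Fin.val_mk]
  · rw [if_neg (by omega), if_neg (by omega)]
  · by_cases hbl : (b : ℕ) = n - 1
    · rw [if_pos (by omega), if_pos hbl, coeff_comp_sq_even]
    · rw [if_neg (by omega), if_neg hbl]
      by_cases hab : (a : ℕ) = (b : ℕ) + 1
      · rw [if_pos (by omega), if_pos hab]
      · rw [if_neg (by omega), if_neg hab]
  · rw [if_neg (by omega)]
    rw [Matrix.one_apply]
    by_cases hab : a = b
    · rw [if_pos (by omega), if_pos hab]
    · rw [if_neg (by simp [Fin.ext_iff] at hab; omega), if_neg hab]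
  · by_cases hbl : (b : ℕ) = n - 1
    · rw [if_pos (by omega), coeff_comp_sq_odd, neg_zero]
    · rw [if_neg (by omega), if_neg (by omega)]

/-- For a non-constant monic polynomial `p` of degree `n`, the companion matrix
of `p(t²)` is similar to the block matrix `[[0, C(p)], [I, 0]]`. -/
theorem companion_comp_sq_similar_block (F : Type*) [Field F] (n : ℕ) (hn : 0 < n)
    (p : Polynomial F) (hp : p.Monic) (hdeg : p.natDegree = n) :
    ∃ P : (Matrix (Fin (n + n)) (Fin (n + n)) F)ˣ,
      companion (n + n) (p.comp (X ^ 2)) =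
        (P : Matrix (Fin (n + n)) (Fin (n + n)) F) *
          (Matrix.reindex finSumFinEquiv finSumFinEquiv
            (Matrix.fromBlocks 0 (companion n p) 1 0)) *
          ((↑P⁻¹ : Matrix (Fin (n + n)) (Fin (n + n)) F)) := by
  set τ : Fin (n + n) ≃ Fin (n + n) := (interleave n).symm.trans finSumFinEquiv with hτ
  refine ⟨⟨(1 : Matrix (Fin (n + n)) (Fin (n + n)) F).submatrix τ id,
      (1 : Matrix (Fin (n + n)) (Fin (n + n)) F).submatrix τ.symm id, ?_, ?_⟩, ?_⟩
  · rw [permL, Matrix.submatrix_submatrix]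
    simp
  · rw [permL, Matrix.submatrix_submatrix]
    simp
  · show _ = (1 : Matrix (Fin (n + n)) (Fin (n + n)) F).submatrix τ id * _ *
      (1 : Matrix (Fin (n + n)) (Fin (n + n)) F).submatrix τ.symm id
    rw [permL, permR, Matrix.submatrix_submatrix, Function.comp_id, Function.id_comp]
    exact companion_comp_sq_eq_submatrix n hn p
end

section
/- For every even monic polynomial p (a polynomial in t²) over a field F, the companion matrix C(p) is the sum of two square-zero matrices. -/
open Polynomial

/-- For every even monic polynomial `p` (a polynomial in `t²`), the companion
matrix of `p` is the sum of two square-zero matrices. -/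
theorem companion_even_sum_two_square_zero (F : Type*) [Field F]
    (p : Polynomial F) (hp : p.Monic) (heven : ∃ q : Polynomial F, p = q.comp (X ^ 2)) :
    ∃ A B : Matrix (Fin p.natDegree) (Fin p.natDegree) F,
      A ^ 2 = 0 ∧ B ^ 2 = 0 ∧ companion p.natDegree p = A + B := by
  obtain ⟨q, hq⟩ := heven
  set n := p.natDegree with hn
  have hneven : Even n := by
    rw [hn, hq, natDegree_comp, natDegree_X_pow]
    exact ⟨q.natDegree, by ring⟩
  have hcoeff : ∀ i : ℕ, i % 2 = 1 → p.coeff i = 0 := by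
    intro i hi
    rw [hq, comp_eq_sum_left, coeff_sum]
    apply Finset.sum_eq_zero
    intro e _
    simp only
    rw [coeff_C_mul, ← pow_mul, coeff_X_pow, if_neg (by omega), mul_zero]
  refine ⟨(Matrix.of fun i j => if (i : ℕ) % 2 = 1 then companion n p i j else 0),
          (Matrix.of fun i j => if (i : ℕ) % 2 = 0 then companion n p i j else 0), ?_, ?_, ?_⟩
  · ext i j
    simp only [pow_two, Matrix.mul_apply, Matrix.zero_apply, Matrix.of_apply]
    apply Finset.sum_eq_zero
    intro k _
    by_cases hk : (k : ℕ) % 2 = 1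
    · by_cases hi : (i : ℕ) % 2 = 1
      · have hcik : companion n p i k = 0 := by
          unfold companion
          by_cases hk1 : (k : ℕ) = n - 1
          · rw [if_pos hk1, hcoeff i hi, neg_zero]
          · rw [if_neg hk1, if_neg (by omega)]
        simp [hi, hcik]
      · simp [hi]
    · simp [hk]
  · ext i j
    simp only [pow_two, Matrix.mul_apply, Matrix.zero_apply, Matrix.of_apply]
    apply Finset.sum_eq_zero
    intro k _
    by_cases hk : (k : ℕ) % 2 = 0
    · by_cases hi : (i : ℕ) % 2 = 0
      · have hcik : companion n p i k = 0 := by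
          unfold companion
          obtain ⟨m, hm⟩ := hneven
          have hklt := k.isLt
          rw [if_neg (by omega), if_neg (by omega)]
        simp [hi, hcik]
      · simp [hi]
    · simp [hk]
  · ext i j
    by_cases hi : (i : ℕ) % 2 = 1
    · have hi' : ¬ ((i : ℕ) % 2 = 0) := by omega
      simp [Matrix.add_apply, Matrix.of_apply, hi, hi']
    · have hi' : (i : ℕ) % 2 = 0 := by omega
      simp [Matrix.add_apply, Matrix.of_apply, hi, hi']
end

section
/- For every odd monic polynomial p (i.e., p(−t) = −p(t)) over a field F, the companion matrix C(p) is the sum of two square-zero matrices. -/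
open Polynomial

/-- For every odd monic polynomial `p` (i.e. `p(t) = t·q(t²)`), the companion
matrix of `p` is the sum of two square-zero matrices. -/
theorem companion_odd_sum_two_square_zero (F : Type*) [Field F]
    (p : Polynomial F) (hp : p.Monic)
    (hodd : ∃ q : Polynomial F, p = X * q.comp (X ^ 2)) :
    ∃ A B : Matrix (Fin p.natDegree) (Fin p.natDegree) F,
      A ^ 2 = 0 ∧ B ^ 2 = 0 ∧ companion p.natDegree p = A + B := by
  obtain ⟨q, hq⟩ := hodd
  have hq0 : q ≠ 0 := by
    rintro rfl
    simp only [comp, eval₂_zero, mul_zero] at hq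
    exact hp.ne_zero hq
  set n := p.natDegree with hn
  have hexp : q.comp (X ^ 2) = expand F 2 q := (expand_eq_comp_X_pow 2).symm
  have hnodd : Odd n := by
    have : n = 1 + q.natDegree * 2 := by
      rw [hn, hq, hexp, natDegree_mul X_ne_zero (by
        rw [Ne, expand_eq_zero (by norm_num)]; exact hq0),
        natDegree_X, natDegree_expand]
    exact ⟨q.natDegree, by omega⟩
  have hcoeff : ∀ i : ℕ, Even i → p.coeff i = 0 := by
    intro i hi
    rcases i with _ | i
    · simp [hq]
    · rw [hq, coeff_X_mul, hexp, coeff_expand (by norm_num)]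
      rw [if_neg]
      simp only [Nat.even_iff] at hi
      omega
  -- the splitting
  refine ⟨fun i j => if Odd (i : ℕ) then companion n p i j else 0,
          fun i j => if Even (i : ℕ) then companion n p i j else 0, ?_, ?_, ?_⟩
  · ext i k
    erw [pow_two, Matrix.mul_apply]
    simp only [Matrix.mul_apply, Matrix.zero_apply]
    apply Finset.sum_eq_zero
    intro j _
    by_cases hj : Odd (j : ℕ)
    · by_cases hi : Odd (i : ℕ)
      · rw [if_pos hi]
        obtain ⟨m, hm⟩ := hnodd
        have : companion n p i j = 0 := by
          unfold companion
          rw [if_neg (by simp only [Nat.odd_iff] at hj; omega),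
            if_neg (by simp only [Nat.odd_iff] at hi hj; omega)]
        rw [this, zero_mul]
      · rw [if_neg hi, zero_mul]
    · rw [if_neg hj, mul_zero]
  · ext i k
    erw [pow_two, Matrix.mul_apply]
    simp only [Matrix.mul_apply, Matrix.zero_apply]
    apply Finset.sum_eq_zero
    intro j _
    by_cases hj : Even (j : ℕ)
    · by_cases hi : Even (i : ℕ)
      · rw [if_pos hi]
        have : companion n p i j = 0 := by
          unfold companion
          by_cases h1 : (j : ℕ) = n - 1
          · rw [if_pos h1, hcoeff _ hi, neg_zero]
          · rw [if_neg h1, if_neg (by simp only [Nat.even_iff] at hi hj; omega)]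
        rw [this, zero_mul]
      · rw [if_neg hi, zero_mul]
    · rw [if_neg hj, mul_zero]
  · ext i j
    by_cases hi : Odd (i : ℕ)
    · erw [Matrix.add_apply]
      simp [hi, Nat.not_even_iff_odd.mpr hi]
    · erw [Matrix.add_apply]
      simp [hi, Nat.not_odd_iff_even.mp hi]
end

section
/- Let u be an invertible endomorphism of a finite-dimensional vector space V over a field F. If u = a + b where a² = 0 and b² = 0, then ker(a) = im(a), ker(b) = im(b), dim ker(a) = dim ker(b) = dim(V)/2, and V = ker(a) ⊕ ker(b). -/
/-- If an invertible endomorphism `u` of a finite-dimensional space is the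
sum of two square-zero endomorphisms `a` and `b`, then `ker a = im a`,
`ker b = im b`, `dim ker a = dim ker b = dim V / 2`, and
`V = ker a ⊕ ker b`. -/
theorem invertible_sum_two_square_zero_structure (F : Type*) [Field F]
    (V : Type*) [AddCommGroup V] [Module F V] [FiniteDimensional F V]
    (u a b : Module.End F V) (hu : IsUnit u) (hab : u = a + b)
    (ha : a ^ 2 = 0) (hb : b ^ 2 = 0) :
    LinearMap.ker a = LinearMap.range a ∧
    LinearMap.ker b = LinearMap.range b ∧
    2 * Module.finrank F (LinearMap.ker a) = Module.finrank F V ∧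
    2 * Module.finrank F (LinearMap.ker b) = Module.finrank F V ∧
    IsCompl (LinearMap.ker a) (LinearMap.ker b) := by
  have hra : LinearMap.range a ≤ LinearMap.ker a := by
    rintro y ⟨x, rfl⟩
    have : (a * a) x = 0 := by rw [← pow_two, ha]; rfl
    simpa [Module.End.mul_apply] using this
  have hrb : LinearMap.range b ≤ LinearMap.ker b := by
    rintro y ⟨x, rfl⟩
    have : (b * b) x = 0 := by rw [← pow_two, hb]; rfl
    simpa [Module.End.mul_apply] using this
  have hbij := (Module.End.isUnit_iff u).mp hu
  have hinj := hbij.injective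
  have hsurj := hbij.surjective
  have hcompl : IsCompl (LinearMap.ker a) (LinearMap.ker b) := by
    constructor
    · rw [Submodule.disjoint_def]
      intro x hxa hxb
      apply hinj
      simp [hab, LinearMap.add_apply, LinearMap.mem_ker.mp hxa, LinearMap.mem_ker.mp hxb]
    · rw [codisjoint_iff_le_sup]
      intro v _
      obtain ⟨x, rfl⟩ := hsurj v
      rw [hab]
      exact Submodule.add_mem_sup (hra ⟨x, rfl⟩) (hrb ⟨x, rfl⟩)
  have hsum : Module.finrank F (LinearMap.ker a) + Module.finrank F (LinearMap.ker b)
      = Module.finrank F V := Submodule.finrank_add_eq_of_isCompl hcompl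
  have hA := LinearMap.finrank_range_add_finrank_ker a
  have hB := LinearMap.finrank_range_add_finrank_ker b
  have hle1 := Submodule.finrank_mono hra
  have hle2 := Submodule.finrank_mono hrb
  have heq1 : Module.finrank F (LinearMap.range a) = Module.finrank F (LinearMap.ker b) := by
    omega
  have heq2 : Module.finrank F (LinearMap.range b) = Module.finrank F (LinearMap.ker a) := by
    omega
  have hka : Module.finrank F (LinearMap.ker a) = Module.finrank F (LinearMap.range a) := by
    omega
  have hkb : Module.finrank F (LinearMap.ker b) = Module.finrank F (LinearMap.range b) := by
    omega
  refine ⟨(Submodule.eq_of_le_of_finrank_eq hra hka.symm).symm,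
    (Submodule.eq_of_le_of_finrank_eq hrb hkb.symm).symm, by omega, by omega, hcompl⟩
end

section
/- Let n ≥ 1, p a monic polynomial of degree n over a field F, and A ∈ Mat_{2n}(F) a rank-n idempotent matrix. Then there exists a square-zero matrix S ∈ Mat_{2n}(F) such that A − S is similar to the companion matrix of p(t(t−1)). -/
open Polynomial

open Matrix

namespace CompProof

/-- Interleaving equivalence: `inl i ↦ 2i+1`, `inr i ↦ 2i`. -/
def ee (n : ℕ) : (Fin n ⊕ Fin n) ≃ Fin (2 * n) where
  toFun x := Sum.elim (fun i : Fin n => (⟨2 * (i : ℕ) + 1, by omega⟩ : Fin (2 * n)))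
    (fun i : Fin n => (⟨2 * (i : ℕ), by omega⟩ : Fin (2 * n))) x
  invFun k := if h : (k : ℕ) % 2 = 0 then Sum.inr ⟨(k : ℕ) / 2, by omega⟩
    else Sum.inl ⟨(k : ℕ) / 2, by omega⟩
  left_inv x := by
    rcases x with i | i <;> simp only [Sum.elim_inl, Sum.elim_inr]
    · simp only [show ¬ ((2 * (i : ℕ) + 1) % 2 = 0) by omega, ↓reduceDIte]
      congr 1
      ext
      simp only []
      omega
    · simp only [show (2 * (i : ℕ) % 2 = 0) by omega, ↓reduceDIte]
      congr 1
      ext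
      simp only []
      omega
  right_inv k := by
    simp only []
    by_cases h : (k : ℕ) % 2 = 0
    · rw [dif_pos h]
      simp only [Sum.elim_inr]
      ext; simp only []; omega
    · rw [dif_neg h]
      simp only [Sum.elim_inl]
      ext; simp only []; omega

def rdeg {n : ℕ} : (Fin n ⊕ Fin n) → ℕ := Sum.elim (fun i => 2 * (i : ℕ) + 1) (fun i => 2 * (i : ℕ))

lemma ee_val {n : ℕ} (x : Fin n ⊕ Fin n) : ((ee n x : Fin (2 * n)) : ℕ) = rdeg x := by
  rcases x with i | i <;> rfl

lemma rdeg_eeSymm {n : ℕ} (k : Fin (2 * n)) : rdeg ((ee n).symm k) = (k : ℕ) := by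
  rw [← ee_val, Equiv.apply_symm_apply]

end CompProof

namespace CompProof

variable {F : Type*} [Field F] {n : ℕ}

/-- `δ₀` basis vector. -/
def del0 (n : ℕ) (F : Type*) [Field F] : Fin n → F := fun i => if (i : ℕ) = 0 then 1 else 0

lemma sum_mulVec {ι : Type*} (s : Finset ι) (A : ι → Matrix (Fin n) (Fin n) F) (v : Fin n → F) :
    (∑ i ∈ s, A i) *ᵥ v = ∑ i ∈ s, (A i *ᵥ v) := by
  ext j
  simp only [Matrix.mulVec, dotProduct, Finset.sum_apply, Matrix.sum_apply,
    Finset.sum_mul]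
  rw [Finset.sum_comm]

lemma companion_mulVec (hn : 0 < n) (p : Polynomial F) (x : Fin n → F) (i : Fin n) :
    (companion n p *ᵥ x) i =
      -(p.coeff i) * x ⟨n - 1, by omega⟩ +
        (if h : 0 < (i : ℕ) then x ⟨(i : ℕ) - 1, by omega⟩ else 0) := by
  have hlast : (⟨n - 1, by omega⟩ : Fin n) ∈ Finset.univ := Finset.mem_univ _
  rw [Matrix.mulVec, dotProduct, ← Finset.add_sum_erase _ _ hlast]
  congr 1
  · simp [companion]
  · by_cases hi : 0 < (i : ℕ)
    · rw [dif_pos hi]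
      rw [Finset.sum_eq_single_of_mem (⟨(i : ℕ) - 1, by omega⟩ : Fin n)]
      · have h1 : ((⟨(i : ℕ) - 1, by omega⟩ : Fin n) : ℕ) ≠ n - 1 := by
          have := i.isLt; simp only []; omega
        simp only [companion, if_neg h1, if_pos (by have := i.isLt; simp only []; omega :
          (i : ℕ) = ((⟨(i : ℕ) - 1, by omega⟩ : Fin n) : ℕ) + 1), one_mul]
      · apply Finset.mem_erase.2
        constructor
        · intro hcon
          have := congrArg (fun t : Fin n => (t : ℕ)) hcon
          have := i.isLt; simp only [] at *; omega
        · exact Finset.mem_univ _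
      · intro b _ hb
        have hbv : (b : ℕ) ≠ (i : ℕ) - 1 := by
          intro hcon; exact hb (Fin.ext hcon)
        by_cases hbn : (b : ℕ) = n - 1
        · exfalso
          rcases Finset.mem_erase.1 ‹b ∈ Finset.univ.erase _› with ⟨hb1, _⟩
          exact hb1 (Fin.ext hbn)
        · simp only [companion, if_neg hbn]
          rw [if_neg (by omega), zero_mul]
    · rw [dif_neg hi]
      apply Finset.sum_eq_zero
      intro b hb
      rcases Finset.mem_erase.1 hb with ⟨hb1, _⟩
      have hbn : (b : ℕ) ≠ n - 1 := fun hcon => hb1 (Fin.ext hcon)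
      simp only [companion, if_neg hbn]
      rw [if_neg (by omega), zero_mul]

lemma companion_pow_mulVec_del0 (hn : 0 < n) (p : Polynomial F) {k : ℕ} (hk : k < n) :
    (companion n p ^ k) *ᵥ del0 n F = fun i : Fin n => (if (i : ℕ) = k then (1 : F) else 0) := by
  induction k with
  | zero => rw [pow_zero, Matrix.one_mulVec]; rfl
  | succ k ih =>
    have hk' : k < n := by omega
    rw [pow_succ', ← Matrix.mulVec_mulVec, ih hk']
    funext i
    rw [companion_mulVec hn]
    have h1 : ((⟨n - 1, by omega⟩ : Fin n) : ℕ) ≠ k := by simp only []; omega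
    rw [if_neg h1, mul_zero, zero_add]
    by_cases hi : 0 < (i : ℕ)
    · rw [dif_pos hi]
      by_cases he : (i : ℕ) = k + 1
      · rw [if_pos (by simp only []; omega), if_pos he]
      · rw [if_neg (by simp only []; omega), if_neg he]
    · rw [dif_neg hi, if_neg (by omega)]

lemma companion_pow_n_mulVec_del0 (hn : 0 < n) (p : Polynomial F) :
    (companion n p ^ n) *ᵥ del0 n F = fun i : Fin n => -(p.coeff (i : ℕ)) := by
  have e : companion n p ^ n = companion n p * companion n p ^ (n - 1) := by
    rw [← pow_succ']
    congr 1
    omega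
  rw [e, ← Matrix.mulVec_mulVec, companion_pow_mulVec_del0 hn p (by omega : n - 1 < n)]
  funext i
  rw [companion_mulVec hn]
  rw [if_pos rfl, mul_one]
  by_cases hi : 0 < (i : ℕ)
  · rw [dif_pos hi, if_neg (by have := i.isLt; simp only []; omega), add_zero]
  · rw [dif_neg hi, add_zero]

lemma aeval_companion_mulVec_del0 (hn : 0 < n) {p : Polynomial F} (hp : p.Monic)
    (hdeg : p.natDegree = n) :
    (Polynomial.aeval (companion n p) p : Matrix (Fin n) (Fin n) F) *ᵥ del0 n F = 0 := by
  rw [Polynomial.aeval_eq_sum_range, hdeg, sum_mulVec]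
  rw [Finset.sum_range_succ]
  have hlead : p.coeff n = 1 := by
    have := hp.coeff_natDegree
    rwa [hdeg] at this
  funext i
  simp only [Finset.sum_apply, Pi.add_apply, Pi.zero_apply, Matrix.smul_mulVec, hlead,
    one_smul]
  rw [companion_pow_n_mulVec_del0 hn p]
  have hcong : ∀ k ∈ Finset.range n, (p.coeff k • ((companion n p ^ k) *ᵥ del0 n F)) i
      = if (i : ℕ) = k then p.coeff k else 0 := by
    intro k hk
    rw [companion_pow_mulVec_del0 hn p (Finset.mem_range.1 hk)]
    simp only [Pi.smul_apply, smul_eq_mul]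
    split <;> simp
  rw [Finset.sum_congr rfl hcong]
  rw [Finset.sum_ite_eq (Finset.range n) (i : ℕ) (fun k => p.coeff k)]
  rw [if_pos (Finset.mem_range.2 i.isLt)]
  simp

end CompProof

namespace CompProof

variable {F : Type*} [Field F] {n : ℕ}

/-- Generalized sum-mulVec. -/
lemma sum_mulVec' {m : Type*} [Fintype m] {ι : Type*} (s : Finset ι)
    (A : ι → Matrix m m F) (v : m → F) :
    (∑ i ∈ s, A i) *ᵥ v = ∑ i ∈ s, (A i *ᵥ v) := by
  ext j
  simp only [Matrix.mulVec, dotProduct, Finset.sum_apply, Matrix.sum_apply,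
    Finset.sum_mul]
  rw [Finset.sum_comm]

/-- The cyclic vector. -/
def v0 (F : Type*) [Field F] (n : ℕ) : (Fin n ⊕ Fin n) → F := Sum.elim 0 (del0 n F)

variable (p : Polynomial F)

/-- The model matrix `M = [[1,1],[N,0]]`. -/
def Mp : Matrix (Fin n ⊕ Fin n) (Fin n ⊕ Fin n) F :=
  Matrix.fromBlocks 1 1 (companion n p) 0

/-- The idempotent part `E = [[1,0],[N,0]]`. -/
def Ep : Matrix (Fin n ⊕ Fin n) (Fin n ⊕ Fin n) F :=
  Matrix.fromBlocks 1 0 (companion n p) 0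

/-- The square-zero part `S = [[0,-1],[0,0]]`. -/
def Sp (F : Type*) [Field F] (n : ℕ) : Matrix (Fin n ⊕ Fin n) (Fin n ⊕ Fin n) F :=
  Matrix.fromBlocks 0 (-1) 0 0

/-- Change of basis `R = [[1,0],[N,1]]`. -/
def Rp : Matrix (Fin n ⊕ Fin n) (Fin n ⊕ Fin n) F :=
  Matrix.fromBlocks 1 0 (companion n p) 1

def RpInv : Matrix (Fin n ⊕ Fin n) (Fin n ⊕ Fin n) F :=
  Matrix.fromBlocks 1 0 (-(companion n p)) 1

def Jp (F : Type*) [Field F] (n : ℕ) : Matrix (Fin n ⊕ Fin n) (Fin n ⊕ Fin n) F :=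
  Matrix.fromBlocks 1 0 0 0

lemma Mp_eq : (Mp p : Matrix (Fin n ⊕ Fin n) (Fin n ⊕ Fin n) F) = Ep p - Sp F n := by
  simp only [Mp, Ep, Sp, sub_eq_add_neg, Matrix.fromBlocks_neg, Matrix.fromBlocks_add,
    Matrix.fromBlocks_inj]
  norm_num

lemma Sp_sq : (Sp F n) * (Sp F n) = 0 := by
  simp only [Sp, Matrix.fromBlocks_multiply, ← Matrix.fromBlocks_zero, Matrix.fromBlocks_inj]
  norm_num

lemma Rp_mul_RpInv : (Rp p : Matrix (Fin n ⊕ Fin n) (Fin n ⊕ Fin n) F) * RpInv p = 1 := by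
  simp only [Rp, RpInv, Matrix.fromBlocks_multiply, ← Matrix.fromBlocks_one,
    Matrix.fromBlocks_inj]
  norm_num

lemma RpInv_mul_Rp : (RpInv p : Matrix (Fin n ⊕ Fin n) (Fin n ⊕ Fin n) F) * Rp p = 1 := by
  simp only [Rp, RpInv, Matrix.fromBlocks_multiply, ← Matrix.fromBlocks_one,
    Matrix.fromBlocks_inj]
  norm_num

lemma Rp_conj_Jp : (Rp p : Matrix (Fin n ⊕ Fin n) (Fin n ⊕ Fin n) F) * Jp F n * RpInv p = Ep p := by
  simp only [Rp, RpInv, Jp, Ep, Matrix.fromBlocks_multiply, Matrix.fromBlocks_inj]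
  norm_num

lemma Mp_sq_sub : (Mp p : Matrix (Fin n ⊕ Fin n) (Fin n ⊕ Fin n) F) * Mp p - Mp p =
    Matrix.fromBlocks (companion n p) 0 0 (companion n p) := by
  simp only [Mp, Matrix.fromBlocks_multiply, sub_eq_add_neg, Matrix.fromBlocks_neg,
    Matrix.fromBlocks_add, Matrix.fromBlocks_inj]
  norm_num

end CompProof

namespace CompProof

variable {F : Type*} [Field F] {n : ℕ} (p : Polynomial F)

lemma Dp_pow_mulVec (k : ℕ) (y : Fin n → F) :
    ((Matrix.fromBlocks (companion n p) 0 0 (companion n p)) ^ k) *ᵥ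
        (Sum.elim (0 : Fin n → F) y)
      = Sum.elim (0 : Fin n → F) ((companion n p ^ k) *ᵥ y) := by
  induction k with
  | zero => simp [Matrix.one_mulVec]
  | succ k ih =>
    rw [pow_succ', ← Matrix.mulVec_mulVec, ih, Matrix.fromBlocks_mulVec]
    simp [Matrix.mulVec_zero, Matrix.zero_mulVec, Matrix.mulVec_mulVec, ← pow_succ']

lemma aeval_D_mulVec (g : Polynomial F) (y : Fin n → F) :
    (Polynomial.aeval (Matrix.fromBlocks (companion n p) 0 0 (companion n p)) g
        : Matrix (Fin n ⊕ Fin n) (Fin n ⊕ Fin n) F) *ᵥ (Sum.elim (0 : Fin n → F) y)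
      = Sum.elim (0 : Fin n → F)
          ((Polynomial.aeval (companion n p) g : Matrix (Fin n) (Fin n) F) *ᵥ y) := by
  rw [Polynomial.aeval_eq_sum_range, Polynomial.aeval_eq_sum_range, sum_mulVec', sum_mulVec]
  funext x
  cases x with
  | inl i =>
    simp only [Finset.sum_apply, Sum.elim_inl, Matrix.smul_mulVec, Pi.smul_apply,
      Dp_pow_mulVec, smul_eq_mul]
    simp
  | inr i =>
    simp only [Finset.sum_apply, Sum.elim_inr, Matrix.smul_mulVec, Pi.smul_apply,
      Dp_pow_mulVec, smul_eq_mul]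

lemma aeval_Mp_sq_sub : (Polynomial.aeval (Mp p) ((X : Polynomial F) ^ 2 - X)
      : Matrix (Fin n ⊕ Fin n) (Fin n ⊕ Fin n) F)
    = Matrix.fromBlocks (companion n p) 0 0 (companion n p) := by
  rw [map_sub, Polynomial.aeval_X_pow, Polynomial.aeval_X, pow_two]
  exact Mp_sq_sub p

lemma q_aeval_Mp_mulVec (hn : 0 < n) (hp : p.Monic) (hdeg : p.natDegree = n) :
    (Polynomial.aeval (Mp p) (p.comp ((X : Polynomial F) ^ 2 - X))
      : Matrix (Fin n ⊕ Fin n) (Fin n ⊕ Fin n) F) *ᵥ v0 F n = 0 := by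
  rw [Polynomial.aeval_comp, aeval_Mp_sq_sub]
  show _ *ᵥ (Sum.elim (0 : Fin n → F) (del0 n F)) = 0
  rw [aeval_D_mulVec, aeval_companion_mulVec_del0 hn hp hdeg]
  funext x
  cases x <;> simp

/-- The columns of the change-of-basis matrix. -/
def wv (j : ℕ) : (Fin n ⊕ Fin n) → F := (Mp p ^ j) *ᵥ v0 F n

lemma wv_succ (j : ℕ) : (wv p (j + 1) : (Fin n ⊕ Fin n) → F) = Mp p *ᵥ wv p j := by
  rw [wv, wv, pow_succ', ← Matrix.mulVec_mulVec]

lemma Mp_mulVec_inl (u : (Fin n ⊕ Fin n) → F) (i : Fin n) :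
    (Mp p *ᵥ u) (Sum.inl i) = u (Sum.inl i) + u (Sum.inr i) := by
  conv_lhs => rw [← Sum.elim_comp_inl_inr u]
  rw [Mp, Matrix.fromBlocks_mulVec]
  simp [Matrix.one_mulVec, Function.comp_def]

lemma Mp_mulVec_inr (u : (Fin n ⊕ Fin n) → F) (i : Fin n) :
    (Mp p *ᵥ u) (Sum.inr i) = (companion n p *ᵥ fun k => u (Sum.inl k)) i := by
  conv_lhs => rw [← Sum.elim_comp_inl_inr u]
  rw [Mp, Matrix.fromBlocks_mulVec]
  simp [Matrix.zero_mulVec, Function.comp_def]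

lemma wv_tri (hn : 0 < n) : ∀ j : ℕ, j < 2 * n →
    (∀ x : Fin n ⊕ Fin n, j < rdeg x → wv p j x = 0) ∧
    (∀ x : Fin n ⊕ Fin n, rdeg x = j → wv p j x = 1) := by
  intro j
  induction j with
  | zero =>
    intro _
    have h0 : (wv p 0 : (Fin n ⊕ Fin n) → F) = v0 F n := by
      rw [wv, pow_zero, Matrix.one_mulVec]
    constructor
    · intro x hx
      rw [h0]
      rcases x with i | i
      · rfl
      · have : 0 < (i : ℕ) := by simpa [rdeg] using hx
        simp [v0, del0]
        omega
    · intro x hx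
      rcases x with i | i
      · exfalso; simp [rdeg] at hx
      · have : (i : ℕ) = 0 := by simp [rdeg] at hx; omega
        rw [h0]
        simp [v0, del0, this]
  | succ j ih =>
    intro hj
    have ih' := ih (by omega)
    have hlast : ∀ h : n - 1 < n, wv p j (Sum.inl ⟨n - 1, h⟩) = 0 := by
      intro h
      apply ih'.1
      show j < 2 * (n - 1) + 1
      omega
    constructor
    · intro x hx
      rcases x with i | i
      · rw [wv_succ, Mp_mulVec_inl]
        rw [ih'.1 (Sum.inl i) (by simp [rdeg] at hx ⊢; omega),
          ih'.1 (Sum.inr i) (by simp [rdeg] at hx ⊢; omega)]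
        simp
      · rw [wv_succ, Mp_mulVec_inr, companion_mulVec hn]
        rw [hlast, mul_zero, zero_add]
        by_cases hi : 0 < (i : ℕ)
        · rw [dif_pos hi]
          apply ih'.1
          simp [rdeg] at hx ⊢
          omega
        · rw [dif_neg hi]
    · intro x hx
      rcases x with i | i
      · rw [wv_succ, Mp_mulVec_inl]
        simp only [rdeg, Sum.elim_inl] at hx
        rw [ih'.1 (Sum.inl i) (by simp [rdeg]; omega),
          ih'.2 (Sum.inr i) (by simp [rdeg]; omega)]
        simp
      · simp only [rdeg, Sum.elim_inr] at hx
        have hi : 0 < (i : ℕ) := by omega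
        rw [wv_succ, Mp_mulVec_inr, companion_mulVec hn]
        rw [hlast, mul_zero, zero_add, dif_pos hi]
        apply ih'.2
        simp [rdeg]
        omega

end CompProof

namespace CompProof

variable {F : Type*} [Field F] {n : ℕ} (p : Polynomial F)

/-- The similarity matrix: columns are `M^j v₀`. -/
def P0 : Matrix (Fin (2 * n)) (Fin (2 * n)) F :=
  fun i j => wv p (j : ℕ) ((ee n).symm i)

lemma P0_tri (hn : 0 < n) : (P0 p : Matrix (Fin (2 * n)) (Fin (2 * n)) F).BlockTriangular (id : Fin (2 * n) → Fin (2 * n)) := by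
  intro i j hij
  apply (wv_tri p hn (j : ℕ) j.isLt).1
  rw [rdeg_eeSymm]
  exact hij

lemma P0_diag (hn : 0 < n) (i : Fin (2 * n)) : (P0 p : Matrix (Fin (2 * n)) (Fin (2 * n)) F) i i = 1 :=
  (wv_tri p hn (i : ℕ) i.isLt).2 _ (rdeg_eeSymm i)

lemma P0_det (hn : 0 < n) : (P0 p : Matrix (Fin (2 * n)) (Fin (2 * n)) F).det = 1 := by
  rw [Matrix.det_of_upperTriangular (P0_tri p hn)]
  simp [P0_diag p hn]

lemma q_natDegree (hp : p.Monic) (hdeg : p.natDegree = n) :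
    (p.comp ((X : Polynomial F) ^ 2 - X)).natDegree = 2 * n := by
  rw [Polynomial.natDegree_comp, hdeg]
  have h2 : ((X : Polynomial F) ^ 2 - X).natDegree = 2 := by
    have hd : ((X : Polynomial F) ^ 2 - X).degree = 2 := by
      rw [Polynomial.degree_sub_eq_left_of_degree_lt]
      · exact Polynomial.degree_X_pow 2
      · rw [Polynomial.degree_X, Polynomial.degree_X_pow]
        norm_num
    exact Polynomial.natDegree_eq_of_degree_eq_some hd
  rw [h2]
  ring

lemma q_monic (hp : p.Monic) (hdeg : p.natDegree = n) :
    (p.comp ((X : Polynomial F) ^ 2 - X)).Monic := by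
  apply hp.comp
  · apply Polynomial.monic_X_pow_sub
    rw [Polynomial.degree_X]
    norm_num
  · have : ((X : Polynomial F) ^ 2 - X).natDegree = 2 := by
      have hd : ((X : Polynomial F) ^ 2 - X).degree = 2 := by
        rw [Polynomial.degree_sub_eq_left_of_degree_lt]
        · exact Polynomial.degree_X_pow 2
        · rw [Polynomial.degree_X, Polynomial.degree_X_pow]
          norm_num
      exact Polynomial.natDegree_eq_of_degree_eq_some hd
    omega

lemma wv_sum_zero (hn : 0 < n) (hp : p.Monic) (hdeg : p.natDegree = n) :
    (wv p (2 * n) : (Fin n ⊕ Fin n) → F) = - ∑ k ∈ Finset.range (2 * n),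
      (p.comp ((X : Polynomial F) ^ 2 - X)).coeff k • wv p k := by
  set q := p.comp ((X : Polynomial F) ^ 2 - X) with hq
  have h0 : (Polynomial.aeval (Mp p) q : Matrix (Fin n ⊕ Fin n) (Fin n ⊕ Fin n) F)
      *ᵥ v0 F n = 0 := q_aeval_Mp_mulVec p hn hp hdeg
  rw [Polynomial.aeval_eq_sum_range, q_natDegree p hp hdeg, sum_mulVec'] at h0
  have h1 : (∑ k ∈ Finset.range (2 * n + 1), q.coeff k • wv p k : (Fin n ⊕ Fin n) → F)
      = 0 := by
    rw [← h0]
    apply Finset.sum_congr rfl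
    intro k _
    rw [Matrix.smul_mulVec]
    rfl
  rw [Finset.sum_range_succ] at h1
  have hlead : q.coeff (2 * n) = 1 := by
    have := (q_monic p hp hdeg).coeff_natDegree
    rwa [q_natDegree p hp hdeg] at this
  rw [hlead, one_smul] at h1
  exact eq_neg_of_add_eq_zero_right h1

lemma Mb_mul_P0 (hn : 0 < n) (hp : p.Monic) (hdeg : p.natDegree = n) :
    (Matrix.reindex (ee n) (ee n) (Mp p)) * (P0 p : Matrix (Fin (2 * n)) (Fin (2 * n)) F)
      = P0 p * companion (2 * n) (p.comp ((X : Polynomial F) ^ 2 - X)) := by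
  set q := p.comp ((X : Polynomial F) ^ 2 - X) with hq
  ext i j
  have hL : ((Matrix.reindex (ee n) (ee n) (Mp p)) *
        (P0 p : Matrix (Fin (2 * n)) (Fin (2 * n)) F)) i j
      = wv p ((j : ℕ) + 1) ((ee n).symm i) := by
    rw [Matrix.mul_apply]
    have : ∀ k : Fin (2 * n), (Matrix.reindex (ee n) (ee n) (Mp p)) i k *
        (P0 p : Matrix (Fin (2 * n)) (Fin (2 * n)) F) k j
        = (fun x => Mp p ((ee n).symm i) x * wv p (j : ℕ) x) ((ee n).symm k) := by
      intro k
      rw [Matrix.reindex_apply, Matrix.submatrix_apply]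
      rfl
    rw [Finset.sum_congr rfl (fun k _ => this k)]
    rw [Equiv.sum_comp ((ee n).symm) (fun x => Mp p ((ee n).symm i) x * wv p (j : ℕ) x)]
    rw [wv_succ]
    rfl
  rw [hL, Matrix.mul_apply]
  by_cases hjl : (j : ℕ) = 2 * n - 1
  · have hcol : ∀ k : Fin (2 * n), P0 p i k * companion (2 * n) q k j
        = -(q.coeff (k : ℕ) • wv p (k : ℕ) ((ee n).symm i)) := by
      intro k
      rw [companion, P0]
      rw [if_pos hjl, smul_eq_mul]
      ring
    rw [Finset.sum_congr rfl (fun k _ => hcol k)]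
    have hj1 : (j : ℕ) + 1 = 2 * n := by have := j.isLt; omega
    rw [hj1, wv_sum_zero p hn hp hdeg]
    simp only [Pi.neg_apply, Finset.sum_apply, Pi.smul_apply, smul_eq_mul,
      ← Fin.sum_univ_eq_sum_range, Finset.sum_neg_distrib]
    rfl
  · have hjlt : (j : ℕ) + 1 < 2 * n := by have := j.isLt; omega
    have hcol : ∀ k : Fin (2 * n), (P0 p : Matrix (Fin (2 * n)) (Fin (2 * n)) F) i k *
          companion (2 * n) q k j
        = if k = (⟨(j : ℕ) + 1, hjlt⟩ : Fin (2 * n)) then wv p ((j : ℕ) + 1) ((ee n).symm i)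
          else 0 := by
      intro k
      rw [companion, P0, if_neg hjl]
      by_cases hk : k = (⟨(j : ℕ) + 1, hjlt⟩ : Fin (2 * n))
      · rw [if_pos hk, if_pos (by rw [hk]), mul_one, hk]
      · rw [if_neg hk, if_neg (fun hcon => hk (Fin.ext (by simpa using hcon))), mul_zero]
    rw [Finset.sum_congr rfl (fun k _ => hcol k), Finset.sum_ite_eq' Finset.univ _ _]
    rw [if_pos (Finset.mem_univ _)]

end CompProof

namespace CompProof

variable {F : Type*} [Field F] {n : ℕ}

lemma idem_similar (hn : 0 < n) (A : Matrix (Fin (2 * n)) (Fin (2 * n)) F)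
    (hidem : A * A = A) (hrank : A.rank = n) :
    ∃ T : (Matrix (Fin (2 * n)) (Fin (2 * n)) F)ˣ,
      A = (T : Matrix (Fin (2 * n)) (Fin (2 * n)) F) *
        (Matrix.reindex (ee n) (ee n) (Jp F n)) * ((T⁻¹ : _ˣ) : Matrix (Fin (2 * n)) (Fin (2 * n)) F) := by
  classical
  set f := A.mulVecLin with hf_def
  have hf : f ∘ₗ f = f := by
    rw [hf_def, ← Matrix.mulVecLin_mul, hidem]
  have hproj : LinearMap.IsProj (LinearMap.range f) f := by
    refine ⟨fun x => LinearMap.mem_range_self f x, ?_⟩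
    rintro x ⟨y, rfl⟩
    exact DFunLike.congr_fun hf y
  have hc : IsCompl (LinearMap.range f) (LinearMap.ker f) := hproj.isCompl
  have hr1 : Module.finrank F (LinearMap.range f) = n := by
    rw [Matrix.rank] at hrank
    exact hrank
  have hdim : Module.finrank F (Fin (2 * n) → F) = 2 * n := by
    simp
  have hr2 : Module.finrank F (LinearMap.ker f) = n := by
    have := LinearMap.finrank_range_add_finrank_ker f
    rw [hdim, hr1] at this
    omega
  set b1 : Module.Basis (Fin n) F (LinearMap.range f) := Module.finBasisOfFinrankEq F _ hr1 with hb1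
  set b2 : Module.Basis (Fin n) F (LinearMap.ker f) := Module.finBasisOfFinrankEq F _ hr2 with hb2
  set B : Module.Basis (Fin n ⊕ Fin n) F (Fin (2 * n) → F) :=
    (b1.prod b2).map (Submodule.prodEquivOfIsCompl _ _ hc) with hB
  have hBinl : ∀ i : Fin n, B (Sum.inl i) = (b1 i : Fin (2 * n) → F) := by
    intro i
    rw [hB, Module.Basis.map_apply]
    have h1 : (b1.prod b2) (Sum.inl i) = (b1 i, (0 : LinearMap.ker f)) := by
      apply Prod.ext
      · exact Module.Basis.prod_apply_inl_fst _ _ _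
      · exact Module.Basis.prod_apply_inl_snd _ _ _
    rw [h1, Submodule.coe_prodEquivOfIsCompl']
    simp
  have hBinr : ∀ i : Fin n, B (Sum.inr i) = (b2 i : Fin (2 * n) → F) := by
    intro i
    rw [hB, Module.Basis.map_apply]
    have h1 : (b1.prod b2) (Sum.inr i) = ((0 : LinearMap.range f), b2 i) := by
      apply Prod.ext
      · exact Module.Basis.prod_apply_inr_fst _ _ _
      · exact Module.Basis.prod_apply_inr_snd _ _ _
    rw [h1, Submodule.coe_prodEquivOfIsCompl']
    simp
  have hfB : ∀ i : Fin n, f (B (Sum.inl i)) = B (Sum.inl i) := by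
    intro i
    rw [hBinl i]
    exact hproj.map_id _ (b1 i).2
  have hfB2 : ∀ i : Fin n, f (B (Sum.inr i)) = 0 := by
    intro i
    rw [hBinr i]
    exact (b2 i).2
  have hmat : LinearMap.toMatrix B B f = Jp F n := by
    ext x y
    rw [LinearMap.toMatrix_apply]
    cases y with
    | inl i =>
      rw [hfB i, Module.Basis.repr_self]
      cases x with
      | inl a =>
        show _ = (1 : Matrix (Fin n) (Fin n) F) a i
        rw [Finsupp.single_apply, Matrix.one_apply]
        simp [Sum.inl.injEq, eq_comm]
      | inr a =>
        show _ = (0 : Matrix (Fin n) (Fin n) F) a i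
        rw [Finsupp.single_apply]
        simp
    | inr i =>
      rw [hfB2 i, map_zero]
      cases x with
      | inl a =>
        show _ = (0 : Matrix (Fin n) (Fin n) F) a i
        simp
      | inr a =>
        show _ = (0 : Matrix (Fin n) (Fin n) F) a i
        simp
  set Bf : Module.Basis (Fin (2 * n)) F (Fin (2 * n) → F) := B.reindex (ee n) with hBf
  have hmat2 : LinearMap.toMatrix Bf Bf f = Matrix.reindex (ee n) (ee n) (Jp F n) := by
    ext i j
    rw [LinearMap.toMatrix_apply, hBf, Module.Basis.reindex_apply, Module.Basis.repr_reindex_apply]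
    rw [Matrix.reindex_apply, Matrix.submatrix_apply, ← hmat, LinearMap.toMatrix_apply]
  have hA : LinearMap.toMatrix (Pi.basisFun F (Fin (2 * n))) (Pi.basisFun F (Fin (2 * n))) f
      = A := by
    rw [LinearMap.toMatrix_eq_toMatrix', hf_def, ← Matrix.toLin'_apply']
    exact LinearMap.toMatrix'_toLin' A
  set std := Pi.basisFun F (Fin (2 * n)) with hstd
  refine ⟨Units.mk (std.toMatrix Bf) (Bf.toMatrix std)
      (Module.Basis.toMatrix_mul_toMatrix_flip std Bf) (Module.Basis.toMatrix_mul_toMatrix_flip Bf std), ?_⟩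
  show A = std.toMatrix Bf * _ * Bf.toMatrix std
  rw [← hmat2, basis_toMatrix_mul_linearMap_toMatrix_mul_basis_toMatrix, hA]

end CompProof

open CompProof

/-- If `p` is a monic polynomial of degree `n ≥ 1` and `A` is a rank-`n`
idempotent `2n × 2n` matrix, then there exists a square-zero matrix `S` such
that `A - S` is similar to the companion matrix of `p(t(t-1))`. -/
theorem idempotent_sub_square_zero_similar_companion (F : Type*) [Field F]
    (n : ℕ) (hn : 1 ≤ n) (p : Polynomial F) (hp : p.Monic) (hdeg : p.natDegree = n)
    (A : Matrix (Fin (2 * n)) (Fin (2 * n)) F) (hidem : A ^ 2 = A)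
    (hrank : A.rank = n) :
    ∃ S : Matrix (Fin (2 * n)) (Fin (2 * n)) F, S ^ 2 = 0 ∧
      ∃ P : (Matrix (Fin (2 * n)) (Fin (2 * n)) F)ˣ,
        A - S = (P : Matrix (Fin (2 * n)) (Fin (2 * n)) F) *
          companion (2 * n) (p.comp (X ^ 2 - X)) *
          ((↑P⁻¹ : Matrix (Fin (2 * n)) (Fin (2 * n)) F)) := by
  classical
  have hn0 : 0 < n := hn
  set q : Polynomial F := p.comp (X ^ 2 - X) with hq
  set φ := Matrix.reindexAlgEquiv F F (ee n) with hφ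
  set Mb := φ (Mp p) with hMbdef
  set Eb := φ (Ep p) with hEbdef
  set Sb := φ (Sp F n) with hSbdef
  set Rb := φ (Rp p) with hRbdef
  set Rbi := φ (RpInv p) with hRbidef
  set Jb := φ (Jp F n) with hJbdef
  obtain ⟨T, hT⟩ := idem_similar hn0 A (by rw [← pow_two]; exact hidem) hrank
  set Tm : Matrix (Fin (2 * n)) (Fin (2 * n)) F := ↑T with hTm
  set Tmi : Matrix (Fin (2 * n)) (Fin (2 * n)) F := ↑T⁻¹ with hTmi
  have hTJ : A = Tm * Jb * Tmi := by
    rw [hJbdef, hφ, Matrix.reindexAlgEquiv_apply]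
    exact hT
  have hRR : Rb * Rbi = 1 := by
    rw [hRbdef, hRbidef, ← _root_.map_mul, Rp_mul_RpInv, _root_.map_one]
  have hRR' : Rbi * Rb = 1 := by
    rw [hRbdef, hRbidef, ← _root_.map_mul, RpInv_mul_Rp, _root_.map_one]
  set uR : (Matrix (Fin (2 * n)) (Fin (2 * n)) F)ˣ := Units.mk Rb Rbi hRR hRR' with huR
  set uP : (Matrix (Fin (2 * n)) (Fin (2 * n)) F)ˣ :=
    Matrix.nonsingInvUnit (P0 p) (by rw [P0_det p hn0]; exact isUnit_one) with huP
  set Pv : Matrix (Fin (2 * n)) (Fin (2 * n)) F := ↑uP with hPv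
  set Pvi : Matrix (Fin (2 * n)) (Fin (2 * n)) F := ↑uP⁻¹ with hPvi
  have huPval : Pv = P0 p := rfl
  have hPP : Pv * Pvi = 1 := Units.mul_inv uP
  set U : (Matrix (Fin (2 * n)) (Fin (2 * n)) F)ˣ := T * uR⁻¹ with hU
  set Um : Matrix (Fin (2 * n)) (Fin (2 * n)) F := ↑U with hUm
  set Umi : Matrix (Fin (2 * n)) (Fin (2 * n)) F := ↑U⁻¹ with hUmi
  have hUval : Um = Tm * Rbi := by
    rw [hUm, hU, Units.val_mul]
    rfl
  have hUinv : Umi = Rb * Tmi := by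
    rw [hUmi, hU, _root_.mul_inv_rev, inv_inv, Units.val_mul]
  have hUU : Umi * Um = 1 := Units.inv_mul U
  have hUU' : Um * Umi = 1 := Units.mul_inv U
  have key : ∀ X Y : Matrix (Fin (2 * n)) (Fin (2 * n)) F,
      (Um * X * Umi) * (Um * Y * Umi) = Um * (X * Y) * Umi := by
    intro X Y
    calc (Um * X * Umi) * (Um * Y * Umi) = Um * (X * ((Umi * Um) * (Y * Umi))) := by
          simp only [mul_assoc]
    _ = Um * (X * Y) * Umi := by rw [hUU, one_mul]; simp only [mul_assoc]
  have hSb2 : Sb * Sb = 0 := by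
    rw [hSbdef, ← _root_.map_mul, Sp_sq, _root_.map_zero]
  have hJb2 : Rbi * Eb * Rb = Jb := by
    have hEb : Rb * Jb * Rbi = Eb := by
      rw [hRbdef, hRbidef, hEbdef, hJbdef, ← _root_.map_mul, ← _root_.map_mul, Rp_conj_Jp]
    calc Rbi * Eb * Rb = Rbi * (Rb * Jb * Rbi) * Rb := by rw [hEb]
    _ = (Rbi * Rb) * Jb * (Rbi * Rb) := by simp only [mul_assoc]
    _ = Jb := by rw [hRR', one_mul, mul_one]
  have hA : A = Um * Eb * Umi := by
    rw [hUval, hUinv, hTJ, ← hJb2]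
    simp only [mul_assoc]
  have hEbSb : Mb = Eb - Sb := by
    rw [hMbdef, hEbdef, hSbdef, ← map_sub]
    congr 1
    exact Mp_eq p
  have hMbP : Mb * Pv = Pv * companion (2 * n) q := by
    rw [huPval, hMbdef, hφ, Matrix.reindexAlgEquiv_apply]
    exact Mb_mul_P0 p hn0 hp hdeg
  have hMb : Mb = Pv * companion (2 * n) q * Pvi := by
    calc Mb = (Mb * Pv) * Pvi := by rw [mul_assoc, hPP, mul_one]
    _ = (Pv * companion (2 * n) q) * Pvi := by rw [hMbP]
  refine ⟨Um * Sb * Umi, ?_, U * uP, ?_⟩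
  · rw [pow_two, key, hSb2, mul_zero, zero_mul]
  · have hPmul : ((U * uP : (Matrix (Fin (2 * n)) (Fin (2 * n)) F)ˣ) :
        Matrix (Fin (2 * n)) (Fin (2 * n)) F) = Um * Pv := Units.val_mul U uP
    have hPmulinv : (((U * uP)⁻¹ : (Matrix (Fin (2 * n)) (Fin (2 * n)) F)ˣ) :
        Matrix (Fin (2 * n)) (Fin (2 * n)) F) = Pvi * Umi := by
      rw [_root_.mul_inv_rev, Units.val_mul]
    rw [hPmul, hPmulinv]
    calc A - Um * Sb * Umi = Um * Eb * Umi - Um * Sb * Umi := by rw [← hA]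
    _ = Um * (Eb - Sb) * Umi := by rw [mul_sub, sub_mul]
    _ = Um * Mb * Umi := by rw [hEbSb]
    _ = Um * (Pv * companion (2 * n) q * Pvi) * Umi := by rw [← hMb]
    _ = Um * Pv * companion (2 * n) q * (Pvi * Umi) := by simp only [mul_assoc]
end
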